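/- Let (X,d) be a compact metric space, f_{1,∞} an NDS on X, ψ ∈ C(X,ℝ), μ a Borel probability measure on X, Z ⊆ X, and s ∈ ℝ. If P_μ(x,ψ) ≥ s for every x ∈ Z and μ(Z) > 0, then P^B_{f_{1,∞}}(Z,ψ) ≥ s and P^W_{f_{1,∞}}(Z,ψ) ≥ s. -/

import Mathlib

open Filter MeasureTheory Set ENNReal

noncomputable section

variable {X : Type} [MetricSpace X]

/-- The iterate `f_1^n = f_n ∘ ⋯ ∘ f_1` of the NDS `f`, where `f 0` is the first map `f_1`. -/
def nIter (f : ℕ → X → X) : ℕ → X → X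
  | 0 => id
  | n + 1 => f n ∘ nIter f n

/-- The Bowen (dynamical) ball `B_n(x, ε)` for the Bowen metric
`d_n(x,y) = max_{0 ≤ j < n} d(f_1^j x, f_1^j y)`. -/
def bowenBall (f : ℕ → X → X) (n : ℕ) (x : X) (ε : ℝ) : Set X :=
  {y | ∀ j < n, dist (nIter f j x) (nIter f j y) < ε}

/-- The Birkhoff sum `S_{1,n} ψ (x) = ∑_{j=0}^{n-1} ψ(f_1^j x)`. -/
def birkSum (f : ℕ → X → X) (ψ : X → ℝ) (n : ℕ) (x : X) : ℝ :=
  ∑ j ∈ Finset.range n, ψ (nIter f j x)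

/-- `S_{1,n} ψ (x, ε) = sup_{y ∈ B_n(x,ε)} S_{1,n} ψ (y)`. -/
def birkSupBall (f : ℕ → X → X) (ψ : X → ℝ) (n : ℕ) (x : X) (ε : ℝ) : ℝ :=
  sSup (birkSum f ψ n '' bowenBall f n x ε)

/-- `M(n, α, ε, Z, ψ)`: infimum of `∑_i exp(-α n_i + S_{1,n_i}ψ(x_i, ε))` over all finite or
countable covers `Z ⊆ ⋃_i B_{n_i}(x_i, ε)` with `n_i ≥ n`. -/
def Mpre (f : ℕ → X → X) (ψ : X → ℝ) (Z : Set X) (n : ℕ) (α ε : ℝ) : ℝ≥0∞ :=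
  sInf { S : ℝ≥0∞ | ∃ (u : Set ℕ) (c : ℕ → X) (m : ℕ → ℕ),
    (∀ i ∈ u, n ≤ m i) ∧ (Z ⊆ ⋃ i ∈ u, bowenBall f (m i) (c i) ε) ∧
    S = ∑' i : u, ENNReal.ofReal (Real.exp (-α * (m i : ℝ) + birkSupBall f ψ (m i) (c i) ε)) }

/-- `𝓜(n, α, ε, Z, ψ)`: as `Mpre` but with the Birkhoff sums evaluated at the centers. -/
def MpreC (f : ℕ → X → X) (ψ : X → ℝ) (Z : Set X) (n : ℕ) (α ε : ℝ) : ℝ≥0∞ :=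
  sInf { S : ℝ≥0∞ | ∃ (u : Set ℕ) (c : ℕ → X) (m : ℕ → ℕ),
    (∀ i ∈ u, n ≤ m i) ∧ (Z ⊆ ⋃ i ∈ u, bowenBall f (m i) (c i) ε) ∧
    S = ∑' i : u, ENNReal.ofReal (Real.exp (-α * (m i : ℝ) + birkSum f ψ (m i) (c i))) }

/-- `M(α, ε, Z, ψ) = lim_{n→∞} M(n, α, ε, Z, ψ)`; the quantity is nondecreasing in `n`,
so the limit is the supremum. -/
def Mlim (f : ℕ → X → X) (ψ : X → ℝ) (Z : Set X) (α ε : ℝ) : ℝ≥0∞ :=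
  ⨆ n : ℕ, Mpre f ψ Z n α ε

/-- `𝓜(α, ε, Z, ψ) = lim_{n→∞} 𝓜(n, α, ε, Z, ψ)`. -/
def MlimC (f : ℕ → X → X) (ψ : X → ℝ) (Z : Set X) (α ε : ℝ) : ℝ≥0∞ :=
  ⨆ n : ℕ, MpreC f ψ Z n α ε

/-- `P^B(ε, Z, ψ) = inf {α : M(α, ε, Z, ψ) = 0}`, as an extended real. -/
def PBeps (f : ℕ → X → X) (ψ : X → ℝ) (Z : Set X) (ε : ℝ) : EReal :=
  sInf (Real.toEReal '' {α : ℝ | Mlim f ψ Z α ε = 0})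

/-- `𝒫^B(ε, Z, ψ) = inf {α : 𝓜(α, ε, Z, ψ) = 0}`. -/
def PBCeps (f : ℕ → X → X) (ψ : X → ℝ) (Z : Set X) (ε : ℝ) : EReal :=
  sInf (Real.toEReal '' {α : ℝ | MlimC f ψ Z α ε = 0})

/-- The Pesin–Pitskel topological pressure `P^B_{f_{1,∞}}(Z, ψ) = lim_{ε→0} P^B(ε, Z, ψ)`. -/
def PB (f : ℕ → X → X) (ψ : X → ℝ) (Z : Set X) : EReal :=
  limUnder (nhdsWithin 0 (Ioi 0)) fun ε : ℝ => PBeps f ψ Z ε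

/-- `W(n, α, ε, Z, ψ)`: the weighted analogue of `Mpre`. -/
def Wpre (f : ℕ → X → X) (ψ : X → ℝ) (Z : Set X) (n : ℕ) (α ε : ℝ) : ℝ≥0∞ :=
  sInf { S : ℝ≥0∞ | ∃ (u : Set ℕ) (cx : ℕ → X) (m : ℕ → ℕ) (c : ℕ → ℝ),
    (∀ i ∈ u, 0 < c i) ∧ (∀ i ∈ u, n ≤ m i) ∧
    (∀ z ∈ Z, 1 ≤ ∑' i : u,
      (bowenBall f (m i) (cx i) ε).indicator (fun _ => ENNReal.ofReal (c i)) z) ∧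
    S = ∑' i : u, ENNReal.ofReal (c i) *
      ENNReal.ofReal (Real.exp (-α * (m i : ℝ) + birkSupBall f ψ (m i) (cx i) ε)) }

/-- `W(α, ε, Z, ψ) = lim_{n→∞} W(n, α, ε, Z, ψ)`. -/
def Wlim (f : ℕ → X → X) (ψ : X → ℝ) (Z : Set X) (α ε : ℝ) : ℝ≥0∞ :=
  ⨆ n : ℕ, Wpre f ψ Z n α ε

/-- `P^W(ε, Z, ψ)`: the critical value of `α` at which `W(α, ε, Z, ψ)` jumps from `∞` to `0`. -/
def PWeps (f : ℕ → X → X) (ψ : X → ℝ) (Z : Set X) (ε : ℝ) : EReal :=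
  sInf (Real.toEReal '' {α : ℝ | Wlim f ψ Z α ε = 0})

/-- The weighted topological pressure `P^W_{f_{1,∞}}(Z, ψ) = lim_{ε→0} P^W(ε, Z, ψ)`. -/
def PW (f : ℕ → X → X) (ψ : X → ℝ) (Z : Set X) : EReal :=
  limUnder (nhdsWithin 0 (Ioi 0)) fun ε : ℝ => PWeps f ψ Z ε

/-- Bowen topological entropy `h^B_top(f_{1,∞}, Z)`, i.e. pressure of the zero potential. -/
def hBtop (f : ℕ → X → X) (Z : Set X) : EReal := PB f (fun _ => 0) Z

/-- Weighted Bowen topological entropy `h^{WB}_top(f_{1,∞}, Z)`. -/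
def hWBtop (f : ℕ → X → X) (Z : Set X) : EReal := PW f (fun _ => 0) Z

/-- `EReal → ℝ≥0∞`, sending `⊤` to `⊤` and everything negative to `0`. -/
def ERealToENNReal (x : EReal) : ℝ≥0∞ := if x = ⊤ then ⊤ else ENNReal.ofReal x.toReal

variable [MeasurableSpace X]

/-- The measure-theoretic local pressure
`P_μ(x,ψ) = lim_{ε→0} liminf_{n→∞} (-log μ(B_n(x,ε)) + S_{1,n}ψ(x))/n`. -/
def Ploc (f : ℕ → X → X) (μ : Measure X) (ψ : X → ℝ) (x : X) : EReal :=
  limUnder (nhdsWithin 0 (Ioi 0)) fun ε : ℝ =>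
    Filter.atTop.liminf fun n : ℕ =>
      (((n : ℝ)⁻¹ : ℝ) : EReal) *
        (-(ENNReal.log (μ (bowenBall f n x ε))) + ((birkSum f ψ n x : ℝ) : EReal))

/-- The integral of an extended-real-valued function: the difference of the lower integrals of
its positive and negative parts. -/
def ERealIntegral (μ : Measure X) (g : X → EReal) : EReal :=
  ((∫⁻ x, ERealToENNReal (g x) ∂μ : ℝ≥0∞) : EReal)
    - ((∫⁻ x, ERealToENNReal (-(g x)) ∂μ : ℝ≥0∞) : EReal)

/-- The measure-theoretic pressure `P_μ(X, ψ) = ∫ P_μ(x, ψ) dμ(x)`. -/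
def Pmeas (f : ℕ → X → X) (μ : Measure X) (ψ : X → ℝ) : EReal :=
  ERealIntegral μ (Ploc f μ ψ)

/-- The measure-theoretic local lower entropy `h̲_μ(f_{1,∞}, x)`. -/
def hloc (f : ℕ → X → X) (μ : Measure X) (x : X) : EReal := Ploc f μ (fun _ => 0) x

/-- The measure-theoretic lower entropy `h̲_μ(f_{1,∞}) = ∫ h̲_μ(f_{1,∞}, x) dμ(x)`. -/
def hmeas (f : ℕ → X → X) (μ : Measure X) : EReal := Pmeas f μ (fun _ => 0)


/-! ### Auxiliary lemmas -/

section Aux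

variable {f : ℕ → X → X} {ψ : X → ℝ} {n : ℕ} {x z : X} {ε ε' : ℝ}

lemma continuous_nIter (hf : ∀ n, Continuous (f n)) (n : ℕ) : Continuous (nIter f n) := by
  induction n with
  | zero => exact continuous_id
  | succ n ih => exact (hf n).comp ih

lemma isOpen_bowenBall (hf : ∀ n, Continuous (f n)) : IsOpen (bowenBall f n x ε) := by
  have : bowenBall f n x ε =
      ⋂ j ∈ Finset.range n, (fun y => dist (nIter f j x) (nIter f j y)) ⁻¹' Iio ε := by
    ext y; simp [bowenBall]
  rw [this]
  refine isOpen_biInter_finset fun j _ => ?_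
  exact isOpen_Iio.preimage ((continuous_const.dist (continuous_nIter hf j)))

lemma self_mem_bowenBall (hε : 0 < ε) : x ∈ bowenBall f n x ε := by
  intro j _; simpa using hε

lemma bowenBall_mono (h : ε ≤ ε') : bowenBall f n x ε ⊆ bowenBall f n x ε' :=
  fun y hy j hj => lt_of_lt_of_le (hy j hj) h

lemma bowenBall_subset_double (hz : z ∈ bowenBall f n x ε) :
    bowenBall f n x ε ⊆ bowenBall f n z (2 * ε) := by
  intro y hy j hj
  calc dist (nIter f j z) (nIter f j y)
      ≤ dist (nIter f j z) (nIter f j x) + dist (nIter f j x) (nIter f j y) := dist_triangle _ _ _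
    _ < ε + ε := add_lt_add (dist_comm (nIter f j x) (nIter f j z) ▸ hz j hj) (hy j hj)
    _ = 2 * ε := by ring

lemma birkSum_le_of_forall_le {C : ℝ} (hC : ∀ y, ψ y ≤ C) (y : X) :
    birkSum f ψ n y ≤ n * C := by
  calc birkSum f ψ n y ≤ ∑ _j ∈ Finset.range n, C :=
        Finset.sum_le_sum fun j _ => hC _
    _ = n * C := by simp [mul_comm]

lemma bddAbove_birkSum_image {C : ℝ} (hC : ∀ y, ψ y ≤ C) (s : Set X) :
    BddAbove (birkSum f ψ n '' s) := by
  refine ⟨n * C, ?_⟩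
  rintro r ⟨y, _, rfl⟩
  exact birkSum_le_of_forall_le hC y

lemma le_birkSupBall {C : ℝ} (hC : ∀ y, ψ y ≤ C) (hz : z ∈ bowenBall f n x ε) :
    birkSum f ψ n z ≤ birkSupBall f ψ n x ε :=
  le_csSup (bddAbove_birkSum_image hC _) (mem_image_of_mem _ hz)

lemma birkSum_le_add_of_mem {v : ℝ} (hv : ∀ a b : X, dist a b ≤ ε → |ψ a - ψ b| ≤ v)
    (hz : z ∈ bowenBall f n x ε) :
    birkSum f ψ n z ≤ birkSum f ψ n x + n * v := by
  have : ∀ j ∈ Finset.range n, ψ (nIter f j z) ≤ ψ (nIter f j x) + v := by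
    intro j hj
    have hd : dist (nIter f j z) (nIter f j x) ≤ ε := by
      rw [dist_comm]; exact (hz j (Finset.mem_range.1 hj)).le
    have := hv _ _ hd
    have := abs_le.1 this
    linarith [this.1]
  calc birkSum f ψ n z ≤ ∑ j ∈ Finset.range n, (ψ (nIter f j x) + v) :=
        Finset.sum_le_sum this
    _ = birkSum f ψ n x + n * v := by
        rw [Finset.sum_add_distrib]; simp [birkSum, mul_comm]

lemma birkSupBall_le_add (hε : 0 < ε) {v : ℝ}
    (hv : ∀ a b : X, dist a b ≤ ε → |ψ a - ψ b| ≤ v) :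
    birkSupBall f ψ n x ε ≤ birkSum f ψ n x + n * v := by
  refine csSup_le ?_ ?_
  · exact ⟨_, mem_image_of_mem _ (self_mem_bowenBall hε)⟩
  · rintro r ⟨y, hy, rfl⟩
    exact birkSum_le_add_of_mem hv hy

end Aux

/-! ### Abstract pressure machinery -/

section Press

/-- The critical value of `α` at which `L α ε` vanishes. -/
def press (L : ℝ → ℝ → ℝ≥0∞) (ε : ℝ) : EReal :=
  sInf (Real.toEReal '' {α : ℝ | L α ε = 0})

lemma press_le_press {L L' : ℝ → ℝ → ℝ≥0∞} {ε ε' : ℝ}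
    (h : ∀ α, L α ε = 0 → L' α ε' = 0) : press L' ε' ≤ press L ε :=
  sInf_le_sInf (Set.image_mono h)

lemma press_le_add {L L' : ℝ → ℝ → ℝ≥0∞} {ε V : ℝ}
    (h : ∀ α, L' (α - V) ε = 0 → L α ε = 0) : press L ε ≤ press L' ε + (V : EReal) := by
  rw [← EReal.sub_le_iff_le_add (Or.inl (EReal.coe_ne_bot V)) (Or.inl (EReal.coe_ne_top V))]
  refine le_sInf ?_
  rintro b ⟨β, hβ, rfl⟩
  rw [EReal.sub_le_iff_le_add (Or.inl (EReal.coe_ne_bot V)) (Or.inl (EReal.coe_ne_top V))]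
  have : L (β + V) ε = 0 := h _ (by simpa using hβ)
  have hmem : ((β + V : ℝ) : EReal) ∈ Real.toEReal '' {α : ℝ | L α ε = 0} :=
    mem_image_of_mem _ this
  calc press L ε ≤ ((β + V : ℝ) : EReal) := sInf_le hmem
    _ = (β : EReal) + (V : EReal) := by rw [EReal.coe_add]

lemma press_tendsto {L LC : ℝ → ℝ → ℝ≥0∞} {V : ℝ → ℝ}
    (h1 : ∀ α ε, 0 < ε → L α ε = 0 → LC α ε = 0)
    (h2 : ∀ α ε, 0 < ε → LC (α - V ε) ε = 0 → L α ε = 0)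
    (h3 : ∀ α ε ε', 0 < ε → ε ≤ ε' → LC α ε' ≤ LC α ε)
    (hV : Tendsto V (nhdsWithin 0 (Ioi (0:ℝ))) (nhds 0)) :
    Tendsto (press L) (nhdsWithin 0 (Ioi (0:ℝ)))
      (nhds (sSup (press LC '' Ioi (0:ℝ)))) := by
  have hanti : AntitoneOn (press LC) (Ioi (0:ℝ)) := by
    intro ε₁ hε₁ ε₂ hε₂ h12
    refine press_le_press fun α hα => ?_
    exact le_antisymm (le_trans (h3 α ε₁ ε₂ hε₁ h12) hα.le) (zero_le)
  have htend : Tendsto (press LC) (nhdsWithin 0 (Ioi (0:ℝ)))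
      (nhds (sSup (press LC '' Ioi (0:ℝ)))) :=
    hanti.tendsto_nhdsGT (OrderTop.bddAbove _)
  have hup : ∀ᶠ ε in nhdsWithin 0 (Ioi (0:ℝ)),
      press L ε ≤ press LC ε + ((V ε : ℝ) : EReal) := by
    filter_upwards [self_mem_nhdsWithin] with ε hε
    exact press_le_add (h2 · ε hε)
  have hlow : ∀ᶠ ε in nhdsWithin 0 (Ioi (0:ℝ)), press LC ε ≤ press L ε := by
    filter_upwards [self_mem_nhdsWithin] with ε hε
    exact press_le_press (h1 · ε hε)
  have hVc : Tendsto (fun ε => ((V ε : ℝ) : EReal)) (nhdsWithin 0 (Ioi (0:ℝ)))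
      (nhds ((0 : ℝ) : EReal)) := (continuous_coe_real_ereal.tendsto _).comp hV
  have haddcont : ContinuousAt (fun p : EReal × EReal => p.1 + p.2)
      (sSup (press LC '' Ioi (0:ℝ)), ((0:ℝ) : EReal)) :=
    EReal.continuousAt_add (Or.inr (by simp)) (Or.inr (by simp))
  have hsum : Tendsto (fun ε => press LC ε + ((V ε : ℝ) : EReal))
      (nhdsWithin 0 (Ioi (0:ℝ))) (nhds (sSup (press LC '' Ioi (0:ℝ)))) := by
    have := haddcont.tendsto.comp (htend.prodMk_nhds hVc)
    simpa [Function.comp_def] using this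
  exact tendsto_of_tendsto_of_tendsto_of_le_of_le' htend hsum hlow hup

end Press

/-! ### Comparison lemmas between the sup-ball and centered versions -/

section Compare

/-- Weighted analogue of `MpreC`: Birkhoff sums evaluated at the centers. -/
def WpreC (f : ℕ → X → X) (ψ : X → ℝ) (Z : Set X) (n : ℕ) (α ε : ℝ) : ℝ≥0∞ :=
  sInf { S : ℝ≥0∞ | ∃ (u : Set ℕ) (cx : ℕ → X) (m : ℕ → ℕ) (c : ℕ → ℝ),
    (∀ i ∈ u, 0 < c i) ∧ (∀ i ∈ u, n ≤ m i) ∧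
    (∀ z ∈ Z, 1 ≤ ∑' i : u,
      (bowenBall f (m i) (cx i) ε).indicator (fun _ => ENNReal.ofReal (c i)) z) ∧
    S = ∑' i : u, ENNReal.ofReal (c i) *
      ENNReal.ofReal (Real.exp (-α * (m i : ℝ) + birkSum f ψ (m i) (cx i))) }

def WlimC (f : ℕ → X → X) (ψ : X → ℝ) (Z : Set X) (α ε : ℝ) : ℝ≥0∞ :=
  ⨆ n : ℕ, WpreC f ψ Z n α ε

variable {f : ℕ → X → X} {ψ : X → ℝ} {Z : Set X} {n : ℕ} {α ε ε' v C : ℝ}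

lemma expTerm_le_of_le {a b : ℝ} (h : a ≤ b) :
    ENNReal.ofReal (Real.exp a) ≤ ENNReal.ofReal (Real.exp b) :=
  ENNReal.ofReal_le_ofReal (Real.exp_le_exp.2 h)

lemma WpreC_le_Wpre (hC : ∀ y, ψ y ≤ C) (hε : 0 < ε) :
    WpreC f ψ Z n α ε ≤ Wpre f ψ Z n α ε := by
  refine le_sInf ?_
  rintro S ⟨u, cx, m, c, hc, hm, hcov, rfl⟩
  refine sInf_le_of_le ⟨u, cx, m, c, hc, hm, hcov, rfl⟩ ?_
  refine ENNReal.tsum_le_tsum fun i => mul_le_mul_right (expTerm_le_of_le ?_) _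
  exact add_le_add_right (le_birkSupBall hC (self_mem_bowenBall hε)) _

lemma Wpre_le_WpreC (hε : 0 < ε) (hv : ∀ a b : X, dist a b ≤ ε → |ψ a - ψ b| ≤ v) :
    Wpre f ψ Z n α ε ≤ WpreC f ψ Z n (α - v) ε := by
  refine le_sInf ?_
  rintro S ⟨u, cx, m, c, hc, hm, hcov, rfl⟩
  refine sInf_le_of_le ⟨u, cx, m, c, hc, hm, hcov, rfl⟩ ?_
  refine ENNReal.tsum_le_tsum fun i => mul_le_mul_right (expTerm_le_of_le ?_) _
  have := birkSupBall_le_add (f := f) (n := m i) (x := cx i) hε hv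
  nlinarith [this]

lemma WpreC_anti (h : ε ≤ ε') : WpreC f ψ Z n α ε' ≤ WpreC f ψ Z n α ε := by
  refine le_sInf ?_
  rintro S ⟨u, cx, m, c, hc, hm, hcov, rfl⟩
  refine sInf_le ⟨u, cx, m, c, hc, hm, fun z hz => ?_, rfl⟩
  refine le_trans (hcov z hz) (ENNReal.tsum_le_tsum fun i => ?_)
  exact Set.indicator_le_indicator_of_subset (bowenBall_mono h) (fun _ => zero_le) z

lemma MpreC_le_Mpre (hC : ∀ y, ψ y ≤ C) (hε : 0 < ε) :
    MpreC f ψ Z n α ε ≤ Mpre f ψ Z n α ε := by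
  refine le_sInf ?_
  rintro S ⟨u, c, m, hm, hcov, rfl⟩
  refine sInf_le_of_le ⟨u, c, m, hm, hcov, rfl⟩ ?_
  refine ENNReal.tsum_le_tsum fun i => expTerm_le_of_le ?_
  exact add_le_add_right (le_birkSupBall hC (self_mem_bowenBall hε)) _

lemma Mpre_le_MpreC (hε : 0 < ε) (hv : ∀ a b : X, dist a b ≤ ε → |ψ a - ψ b| ≤ v) :
    Mpre f ψ Z n α ε ≤ MpreC f ψ Z n (α - v) ε := by
  refine le_sInf ?_
  rintro S ⟨u, c, m, hm, hcov, rfl⟩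
  refine sInf_le_of_le ⟨u, c, m, hm, hcov, rfl⟩ ?_
  refine ENNReal.tsum_le_tsum fun i => expTerm_le_of_le ?_
  have := birkSupBall_le_add (f := f) (n := m i) (x := c i) hε hv
  nlinarith [this]

lemma MpreC_anti (h : ε ≤ ε') : MpreC f ψ Z n α ε' ≤ MpreC f ψ Z n α ε := by
  refine le_sInf ?_
  rintro S ⟨u, c, m, hm, hcov, rfl⟩
  refine sInf_le ⟨u, c, m, hm, fun z hz => ?_, rfl⟩
  obtain ⟨i, hi, hzB⟩ := mem_iUnion₂.1 (hcov hz)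
  exact mem_iUnion₂.2 ⟨i, hi, bowenBall_mono h hzB⟩

/-- A cover yields a weighted cover with weights 1, so `Wpre ≤ Mpre`. -/
lemma Wpre_le_Mpre : Wpre f ψ Z n α ε ≤ Mpre f ψ Z n α ε := by
  refine le_sInf ?_
  rintro S ⟨u, c, m, hm, hcov, rfl⟩
  refine sInf_le_of_le ⟨u, c, m, fun _ => 1, fun i _ => one_pos, hm, fun z hz => ?_, rfl⟩ ?_
  · obtain ⟨i, hi, hzB⟩ := mem_iUnion₂.1 (hcov hz)
    calc (1 : ℝ≥0∞) = (bowenBall f (m i) (c i) ε).indicator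
          (fun _ => ENNReal.ofReal (1:ℝ)) z := by
          rw [Set.indicator_of_mem hzB]; simp
      _ ≤ _ := ENNReal.le_tsum (⟨i, hi⟩ : u)
  · refine le_of_eq (tsum_congr fun i => ?_)
    simp

end Compare

/-! ### The modulus of continuity -/

section Modulus

/-- Modulus of continuity of `ψ` at scale `ε`. -/
def modulus (ψ : X → ℝ) (ε : ℝ) : ℝ :=
  sSup ((fun p : X × X => |ψ p.1 - ψ p.2|) '' {p | dist p.1 p.2 ≤ ε})

variable {ψ : X → ℝ} {ε : ℝ}

lemma abs_bound_of_compact [CompactSpace X] (hψ : Continuous ψ) :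
    ∃ C, ∀ x : X, |ψ x| ≤ C := by
  obtain ⟨C, hC⟩ := (isCompact_range (hψ.norm)).bddAbove
  exact ⟨C, fun x => by simpa [Real.norm_eq_abs] using hC (mem_range_self (f := fun x => ‖ψ x‖) x)⟩

lemma bddAbove_modulus_set [CompactSpace X] (hψ : Continuous ψ) :
    BddAbove ((fun p : X × X => |ψ p.1 - ψ p.2|) '' {p | dist p.1 p.2 ≤ ε}) := by
  obtain ⟨C, hC⟩ := abs_bound_of_compact hψ
  refine ⟨2 * C, ?_⟩
  rintro r ⟨⟨a, b⟩, _, rfl⟩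
  calc |ψ a - ψ b| ≤ |ψ a| + |ψ b| := abs_sub _ _
    _ ≤ 2 * C := by linarith [hC a, hC b]

lemma modulus_spec [CompactSpace X] (hψ : Continuous ψ) {a b : X}
    (hd : dist a b ≤ ε) : |ψ a - ψ b| ≤ modulus ψ ε :=
  le_csSup (bddAbove_modulus_set hψ) ⟨(a, b), hd, rfl⟩

lemma modulus_tendsto [CompactSpace X] [Nonempty X] (hψ : Continuous ψ) :
    Tendsto (modulus ψ) (nhdsWithin 0 (Ioi (0:ℝ))) (nhds 0) := by
  rw [Metric.tendsto_nhdsWithin_nhds]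
  intro η hη
  obtain ⟨δ, hδ, hδ'⟩ := Metric.uniformContinuous_iff.1
    (CompactSpace.uniformContinuous_of_continuous hψ) (η / 2) (by linarith)
  refine ⟨δ, hδ, fun {ε} hε hεδ => ?_⟩
  have hεpos : 0 < ε := hε
  have hεδ' : ε < δ := by
    rwa [Real.dist_eq, sub_zero, abs_of_pos hεpos] at hεδ
  obtain ⟨x₀⟩ := ‹Nonempty X›
  have hne : ((fun p : X × X => |ψ p.1 - ψ p.2|) ''
      {p | dist p.1 p.2 ≤ ε}).Nonempty :=
    ⟨0, ⟨(x₀, x₀), by simpa using hεpos.le, by simp⟩⟩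
  have hub : modulus ψ ε ≤ η / 2 := by
    refine csSup_le hne ?_
    rintro r ⟨⟨a, b⟩, hab, rfl⟩
    have : dist (ψ a) (ψ b) < η / 2 := hδ' (lt_of_le_of_lt hab hεδ')
    rw [Real.dist_eq] at this
    exact this.le
  have hlb : 0 ≤ modulus ψ ε := by
    refine le_csSup (bddAbove_modulus_set hψ) ?_
    exact ⟨(x₀, x₀), by simpa using hεpos.le, by simp⟩
  rw [Real.dist_eq, sub_zero, abs_of_nonneg hlb]
  linarith

end Modulus

/-! ### Extraction from the local pressure hypothesis -/

section Extract

variable {f : ℕ → X → X} {ψ : X → ℝ} {μ : Measure X} {x : X} {s c : ℝ}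

lemma liminf_aux_antitone (μ : Measure X) (f : ℕ → X → X) (ψ : X → ℝ) (x : X) :
    AntitoneOn (fun ε : ℝ => Filter.atTop.liminf fun n : ℕ =>
      (((n : ℝ)⁻¹ : ℝ) : EReal) *
        (-(ENNReal.log (μ (bowenBall f n x ε))) + ((birkSum f ψ n x : ℝ) : EReal)))
      (Ioi (0:ℝ)) := by
  intro ε₁ _ ε₂ _ h12
  refine Filter.liminf_le_liminf (Filter.Eventually.of_forall fun n => ?_)
  refine mul_le_mul_of_nonneg_left ?_ ?_
  · refine add_le_add_left ?_ _
    rw [EReal.neg_le_neg_iff]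
    exact ENNReal.log_monotone (measure_mono (bowenBall_mono h12))
  · exact EReal.coe_nonneg.2 (inv_nonneg.2 (Nat.cast_nonneg n))

lemma eventually_measure_bound (hloc : (s : EReal) ≤ Ploc f μ ψ x) (hc : c < s) :
    ∃ ε > 0, ∀ᶠ n in atTop,
      μ (bowenBall f n x ε) ≤ ENNReal.ofReal (Real.exp (-c * n + birkSum f ψ n x)) := by
  set g := fun ε : ℝ => Filter.atTop.liminf fun n : ℕ =>
      (((n : ℝ)⁻¹ : ℝ) : EReal) *
        (-(ENNReal.log (μ (bowenBall f n x ε))) + ((birkSum f ψ n x : ℝ) : EReal)) with hg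
  have htd : Tendsto g (nhdsWithin 0 (Ioi (0:ℝ))) (nhds (sSup (g '' Ioi 0))) :=
    (liminf_aux_antitone μ f ψ x).tendsto_nhdsGT (OrderTop.bddAbove _)
  have hPl : Ploc f μ ψ x = sSup (g '' Ioi 0) := htd.limUnder_eq
  have hlt : (c : EReal) < sSup (g '' Ioi 0) := by
    rw [← hPl]
    exact lt_of_lt_of_le (EReal.coe_lt_coe_iff.2 hc) hloc
  obtain ⟨b, ⟨ε, hε, rfl⟩, hcb⟩ := lt_sSup_iff.1 hlt
  refine ⟨ε, hε, ?_⟩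
  have hev := Filter.eventually_lt_of_lt_liminf hcb
  filter_upwards [hev, eventually_ge_atTop 1] with n hn hn1
  set S := birkSum f ψ n x with hS
  set B := μ (bowenBall f n x ε) with hB
  -- turn `c < n⁻¹ * A` into `n * c < A`
  have hnpos : (0 : ℝ) < (n : ℝ) := by exact_mod_cast hn1
  have hnc : (((n : ℝ) * c : ℝ) : EReal) < -(ENNReal.log B) + ((S : ℝ) : EReal) := by
    set A := -(ENNReal.log B) + ((S : ℝ) : EReal) with hA
    have hrw : (((n : ℝ)⁻¹ : ℝ) : EReal) * A = A / ((n : ℝ) : EReal) := by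
      rw [EReal.coe_inv, div_eq_mul_inv, EReal.mul_comm]
    rw [hrw] at hn
    by_contra hcon
    push_neg at hcon
    have : A / ((n : ℝ) : EReal) ≤ (c : EReal) := by
      refine (EReal.div_le_iff_le_mul (by exact_mod_cast hnpos) (EReal.coe_ne_top _)).2 ?_
      rw [← EReal.coe_mul]
      exact hcon
    exact absurd hn (not_lt.2 this)
  -- conclude the measure bound
  have hlog : ENNReal.log B ≤ ((-c * n + S : ℝ) : EReal) := by
    generalize hl : ENNReal.log B = l at hnc ⊢
    induction l using EReal.rec with
    | bot => exact bot_le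
    | coe r =>
        have : (((n : ℝ) * c : ℝ) : EReal) < (((-r + S : ℝ)) : EReal) := by
          rwa [← EReal.coe_neg, ← EReal.coe_add] at hnc
        rw [EReal.coe_lt_coe_iff] at this
        exact EReal.coe_le_coe_iff.2 (by linarith)
    | top =>
        exfalso
        rw [EReal.neg_top, EReal.bot_add] at hnc
        exact absurd hnc (not_lt_bot)
  have : ENNReal.log B ≤ ENNReal.log (ENNReal.ofReal (Real.exp (-c * n + S))) := by
    rwa [ENNReal.log_ofReal_of_pos (Real.exp_pos _), Real.log_exp]
  exact ENNReal.log_le_log_iff.1 this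

end Extract

/-! ### The core mass distribution estimate -/

section Core

variable {f : ℕ → X → X} {ψ : X → ℝ} {Z Z₀ : Set X} {c ε₀ ε α C : ℝ} {N : ℕ}

lemma core_bound [BorelSpace X] (hf : ∀ n, Continuous (f n)) (hC : ∀ y, ψ y ≤ C)
    (μ : Measure X) (hZ₀Z : Z₀ ⊆ Z)
    (hprop : ∀ z ∈ Z₀, ∀ n, N ≤ n →
      μ (bowenBall f n z ε₀) ≤ ENNReal.ofReal (Real.exp (-c * n + birkSum f ψ n z)))
    (hε : 0 < ε) (h2ε : 2 * ε ≤ ε₀) (hα : α ≤ c) :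
    μ Z₀ ≤ Wpre f ψ Z N α ε := by
  refine le_sInf ?_
  rintro S ⟨u, cx, m, cw, hcw, hm, hcov, rfl⟩
  classical
  set B : ℕ → Set X := fun i => bowenBall f (m i) (cx i) ε with hBdef
  set u' : Set ℕ := {i ∈ u | (B i ∩ Z₀).Nonempty} with hu'def
  have hsub : u' ⊆ u := fun i hi => hi.1
  -- the relevant weighted family still covers `Z₀`
  have hcov' : ∀ z ∈ Z₀, 1 ≤ ∑' i : u',
      (B i).indicator (fun _ => ENNReal.ofReal (cw i)) z := by
    intro z hz
    have h1 := hcov z (hZ₀Z hz)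
    have hzero : (∑' i : ↑(u \ u'), (B i).indicator
        (fun _ => ENNReal.ofReal (cw i)) z) = 0 := by
      rw [ENNReal.tsum_eq_zero]
      rintro ⟨i, hiu, hiu'⟩
      by_cases hzB : z ∈ B i
      · exact absurd (⟨hiu, ⟨z, hzB, hz⟩⟩ : i ∈ u') hiu'
      · exact Set.indicator_of_notMem hzB _
    have hsplit : (∑' i : ↑(u' ∪ (u \ u')), (B i).indicator
          (fun _ => ENNReal.ofReal (cw i)) z)
        = (∑' i : u', (B i).indicator (fun _ => ENNReal.ofReal (cw i)) z)
          + ∑' i : ↑(u \ u'), (B i).indicator (fun _ => ENNReal.ofReal (cw i)) z :=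
      Summable.tsum_union_disjoint (f := fun i => (B i).indicator (fun _ => ENNReal.ofReal (cw i)) z)
        disjoint_sdiff_self_right ENNReal.summable ENNReal.summable
    rw [Set.union_diff_cancel hsub] at hsplit
    calc (1 : ℝ≥0∞) ≤ _ := h1
      _ = _ := hsplit
      _ = _ := by rw [hzero, add_zero]
  -- the measurable weighted sum function
  set g : X → ℝ≥0∞ := fun z => ∑' i : u',
      (B i).indicator (fun _ => ENNReal.ofReal (cw i)) z with hgdef
  have hgmeas : Measurable g :=
    Measurable.ennreal_tsum fun i =>
      measurable_const.indicator (isOpen_bowenBall hf).measurableSet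
  have hZ₀g : Z₀ ⊆ {z | 1 ≤ g z} := fun z hz => hcov' z hz
  have hmarkov : μ {z | 1 ≤ g z} ≤ ∫⁻ z, g z ∂μ := by
    have := mul_meas_ge_le_lintegral₀ hgmeas.aemeasurable (μ := μ) 1
    simpa using this
  have hint : (∫⁻ z, g z ∂μ) = ∑' i : u', ENNReal.ofReal (cw i) * μ (B i) := by
    rw [hgdef]
    rw [lintegral_tsum fun i =>
      (measurable_const.indicator (isOpen_bowenBall hf).measurableSet).aemeasurable]
    exact tsum_congr fun i =>
      lintegral_indicator_const (isOpen_bowenBall hf).measurableSet _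
  -- per-term estimate
  have hterm : ∀ i : u', ENNReal.ofReal (cw i) * μ (B i) ≤
      ENNReal.ofReal (cw i) *
        ENNReal.ofReal (Real.exp (-α * (m i : ℝ) + birkSupBall f ψ (m i) (cx i) ε)) := by
    rintro ⟨i, hiu, z, hzB, hzZ₀⟩
    refine mul_le_mul_right ?_ _
    calc μ (B i) ≤ μ (bowenBall f (m i) z (2 * ε)) :=
          measure_mono (bowenBall_subset_double hzB)
      _ ≤ μ (bowenBall f (m i) z ε₀) := measure_mono (bowenBall_mono h2ε)
      _ ≤ ENNReal.ofReal (Real.exp (-c * (m i) + birkSum f ψ (m i) z)) :=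
          hprop z hzZ₀ (m i) (hm i hiu)
      _ ≤ _ := by
          refine expTerm_le_of_le ?_
          have h1 : birkSum f ψ (m i) z ≤ birkSupBall f ψ (m i) (cx i) ε :=
            le_birkSupBall hC hzB
          have h2 : -c * (m i : ℝ) ≤ -α * (m i : ℝ) := by
            have : (0:ℝ) ≤ (m i : ℝ) := Nat.cast_nonneg _
            nlinarith
          linarith
  -- put everything together
  calc μ Z₀ ≤ μ {z | 1 ≤ g z} := measure_mono hZ₀g
    _ ≤ ∫⁻ z, g z ∂μ := hmarkov
    _ = ∑' i : u', ENNReal.ofReal (cw i) * μ (B i) := hint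
    _ ≤ ∑' i : u', ENNReal.ofReal (cw i) *
          ENNReal.ofReal (Real.exp (-α * (m i : ℝ) + birkSupBall f ψ (m i) (cx i) ε)) :=
        ENNReal.tsum_le_tsum hterm
    _ ≤ ∑' i : u, ENNReal.ofReal (cw i) *
          ENNReal.ofReal (Real.exp (-α * (m i : ℝ) + birkSupBall f ψ (m i) (cx i) ε)) :=
        Summable.tsum_le_tsum_of_inj (Set.inclusion hsub) (Set.inclusion_injective hsub)
          (fun _ _ => zero_le) (fun _ => le_rfl) ENNReal.summable ENNReal.summable

end Core

/-- If `P_μ(x,ψ) ≥ s` for all `x ∈ Z` and `μ(Z) > 0`, then the Pesin–Pitskel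
and weighted topological pressures of `Z` are at least `s`. -/
theorem statement1 [CompactSpace X] [BorelSpace X]
    (f : ℕ → X → X) (hf : ∀ n, Continuous (f n)) (ψ : X → ℝ) (hψ : Continuous ψ)
    (μ : Measure X) [IsProbabilityMeasure μ] (Z : Set X) (s : ℝ)
    (h : ∀ x ∈ Z, (s : EReal) ≤ Ploc f μ ψ x) (hμZ : 0 < μ Z) :
    (s : EReal) ≤ PB f ψ Z ∧ (s : EReal) ≤ PW f ψ Z := by
  have hne : Nonempty X := by
    by_contra hxe
    rw [not_nonempty_iff] at hxe
    have h1 : μ univ = 1 := measure_univ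
    rw [Set.univ_eq_empty_iff.2 hxe, measure_empty] at h1
    exact zero_ne_one h1
  obtain ⟨C, hC'⟩ := abs_bound_of_compact hψ
  have hC : ∀ y, ψ y ≤ C := fun y => (abs_le.1 (hC' y)).2
  have hVt := modulus_tendsto hψ
  have hVspec : ∀ ε : ℝ, ∀ a b : X, dist a b ≤ ε → |ψ a - ψ b| ≤ modulus ψ ε :=
    fun _ _ _ hd => modulus_spec hψ hd
  -- convergence of the two pressures
  have htB : Tendsto (fun ε => PBeps f ψ Z ε) (nhdsWithin 0 (Ioi (0:ℝ)))
      (nhds (sSup (press (MlimC f ψ Z) '' Ioi 0))) := by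
    refine press_tendsto (L := Mlim f ψ Z) (LC := MlimC f ψ Z) (V := modulus ψ)
      ?_ ?_ ?_ hVt
    · intro α ε hε h0
      have h1 : MlimC f ψ Z α ε ≤ Mlim f ψ Z α ε :=
        iSup_mono fun n => MpreC_le_Mpre hC hε
      rw [h0] at h1
      exact le_antisymm h1 (zero_le)
    · intro α ε hε h0
      have h1 : Mlim f ψ Z α ε ≤ MlimC f ψ Z (α - modulus ψ ε) ε :=
        iSup_mono fun n => Mpre_le_MpreC hε (hVspec ε)
      rw [h0] at h1
      exact le_antisymm h1 (zero_le)
    · intro α ε ε' hε hεε'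
      exact iSup_mono fun n => MpreC_anti hεε'
  have htW : Tendsto (fun ε => PWeps f ψ Z ε) (nhdsWithin 0 (Ioi (0:ℝ)))
      (nhds (sSup (press (WlimC f ψ Z) '' Ioi 0))) := by
    refine press_tendsto (L := Wlim f ψ Z) (LC := WlimC f ψ Z) (V := modulus ψ)
      ?_ ?_ ?_ hVt
    · intro α ε hε h0
      have h1 : WlimC f ψ Z α ε ≤ Wlim f ψ Z α ε :=
        iSup_mono fun n => WpreC_le_Wpre hC hε
      rw [h0] at h1
      exact le_antisymm h1 (zero_le)
    · intro α ε hε h0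
      have h1 : Wlim f ψ Z α ε ≤ WlimC f ψ Z (α - modulus ψ ε) ε :=
        iSup_mono fun n => Wpre_le_WpreC hε (hVspec ε)
      rw [h0] at h1
      exact le_antisymm h1 (zero_le)
    · intro α ε ε' hε hεε'
      exact iSup_mono fun n => WpreC_anti hεε'
  have hPBeq : PB f ψ Z = sSup (press (MlimC f ψ Z) '' Ioi 0) := htB.limUnder_eq
  have hPWeq : PW f ψ Z = sSup (press (WlimC f ψ Z) '' Ioi 0) := htW.limUnder_eq
  -- the key lower bound
  have key : ∀ c : ℝ, c < s → ((c : EReal) ≤ PB f ψ Z ∧ (c : EReal) ≤ PW f ψ Z) := by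
    intro c hc
    set ZZ : ℕ → ℕ → Set X := fun k N => {x ∈ Z | ∀ n, N ≤ n →
      μ (bowenBall f n x (1/((k:ℝ)+1))) ≤
        ENNReal.ofReal (Real.exp (-c * n + birkSum f ψ n x))} with hZZ
    have hZsub : Z ⊆ ⋃ k, ⋃ N, ZZ k N := by
      intro x hx
      obtain ⟨ε, hε, hev⟩ := eventually_measure_bound (h x hx) hc
      obtain ⟨k, hk⟩ : ∃ k : ℕ, 1/((k:ℝ)+1) ≤ ε := by
        obtain ⟨k, hk⟩ := exists_nat_one_div_lt hε
        exact ⟨k, hk.le⟩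
      obtain ⟨N, hN⟩ := eventually_atTop.1 hev
      refine mem_iUnion.2 ⟨k, mem_iUnion.2 ⟨N, hx, fun n hn => ?_⟩⟩
      exact le_trans (measure_mono (bowenBall_mono hk)) (hN n hn)
    obtain ⟨k, N, hpos⟩ : ∃ k N, 0 < μ (ZZ k N) := by
      by_contra hcon
      push_neg at hcon
      have hz : ∀ k N, μ (ZZ k N) = 0 := fun k N =>
        le_antisymm (hcon k N) (zero_le)
      have hle : μ Z ≤ ∑' k : ℕ, ∑' N : ℕ, μ (ZZ k N) :=
        le_trans (measure_mono hZsub) (le_trans (measure_iUnion_le _)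
          (ENNReal.tsum_le_tsum fun k => measure_iUnion_le _))
      simp only [hz, tsum_zero] at hle
      exact absurd (lt_of_lt_of_le hμZ hle) (lt_irrefl _)
    set ε₀ : ℝ := 1/((k:ℝ)+1) with hε₀def
    have hε₀ : 0 < ε₀ := by positivity
    have hZ₀Z : ZZ k N ⊆ Z := fun x hx => hx.1
    have hprop : ∀ z ∈ ZZ k N, ∀ n, N ≤ n →
        μ (bowenBall f n z ε₀) ≤
          ENNReal.ofReal (Real.exp (-c * n + birkSum f ψ n z)) :=
      fun z hz => hz.2
    have hevB : ∀ᶠ ε in nhdsWithin 0 (Ioi (0:ℝ)),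
        ((c : EReal) ≤ PBeps f ψ Z ε ∧ (c : EReal) ≤ PWeps f ψ Z ε) := by
      filter_upwards [Ioc_mem_nhdsGT (by positivity : (0:ℝ) < ε₀/2)] with ε hε
      have hεpos : 0 < ε := hε.1
      have h2ε : 2 * ε ≤ ε₀ := by linarith [hε.2]
      have hWbound : ∀ α : ℝ, Wlim f ψ Z α ε = 0 → (c : EReal) ≤ (α : EReal) := by
        intro α h0
        by_contra hlt
        push_neg at hlt
        have hαc : α ≤ c := (EReal.coe_lt_coe_iff.1 hlt).le
        have h1 : μ (ZZ k N) ≤ Wpre f ψ Z N α ε :=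
          core_bound hf hC μ hZ₀Z hprop hεpos h2ε hαc
        have h2 : Wpre f ψ Z N α ε ≤ Wlim f ψ Z α ε :=
          le_iSup (fun n => Wpre f ψ Z n α ε) N
        rw [h0] at h2
        exact absurd (lt_of_lt_of_le hpos (le_trans h1 h2)) (lt_irrefl _)
      constructor
      · refine le_sInf ?_
        rintro b ⟨α, hα, rfl⟩
        have hW0 : Wlim f ψ Z α ε = 0 := by
          have hle : Wlim f ψ Z α ε ≤ Mlim f ψ Z α ε :=
            iSup_mono fun n => Wpre_le_Mpre
        -- hα : Mlim f ψ Z α ε = 0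
          rw [show Mlim f ψ Z α ε = 0 from hα] at hle
          exact le_antisymm hle (zero_le)
        exact hWbound α hW0
      · refine le_sInf ?_
        rintro b ⟨α, hα, rfl⟩
        exact hWbound α hα
    constructor
    · rw [hPBeq]
      exact ge_of_tendsto htB (hevB.mono fun ε hb => hb.1)
    · rw [hPWeq]
      exact ge_of_tendsto htW (hevB.mono fun ε hb => hb.2)
  constructor
  · by_contra hlt
    push_neg at hlt
    obtain ⟨r, h1, h2⟩ := EReal.exists_between_coe_real hlt
    exact absurd (key r (EReal.coe_lt_coe_iff.1 h2)).1 (not_le.2 h1)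
  · by_contra hlt
    push_neg at hlt
    obtain ⟨r, h1, h2⟩ := EReal.exists_between_coe_real hlt
    exact absurd (key r (EReal.coe_lt_coe_iff.1 h2)).2 (not_le.2 h1)

end
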